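/- For every integer n ≥ 3, every strong-separating path system in the complete graph K_n has at least n paths, i.e., ssp(K_n) ≥ n. -/

import Mathlib

open SimpleGraph

/-- A strong-separating path system in `G`: a list of paths of `G` such that
for any two distinct edges `e, f` of `G` some path contains `e` but not `f`. -/
def IsStrongSeparatingSystem {V : Type} (G : SimpleGraph V)
    (P : List (Σ u : V, Σ v : V, G.Walk u v)) : Prop :=
  (∀ p ∈ P, p.2.2.IsPath) ∧
  (∀ e ∈ G.edgeSet, ∀ f ∈ G.edgeSet, e ≠ f →
    ∃ p ∈ P, e ∈ p.2.2.edges ∧ f ∉ p.2.2.edges)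

/-- `ssp G` is the minimum size of a strong-separating path system in `G`. -/
noncomputable def ssp {V : Type} (G : SimpleGraph V) : ℕ :=
  sInf { k : ℕ | ∃ P : List (Σ u : V, Σ v : V, G.Walk u v),
    IsStrongSeparatingSystem G P ∧ P.length = k }

/-- The number of members of the family `Q` containing the edge `e`. -/
noncomputable def cnt {n k : ℕ}
    (Q : Fin k → (Σ u : Fin n, Σ v : Fin n, (⊤ : SimpleGraph (Fin n)).Walk u v))
    (e : Sym2 (Fin n)) : ℕ :=
  (Finset.univ.filter (fun i => e ∈ (Q i).2.2.edges)).card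

/-- Any edge of `K_n`, `n ≥ 3`, has a distinct companion edge. -/
lemma exists_other_edge {n : ℕ} (hn : 3 ≤ n) {e : Sym2 (Fin n)}
    (he : e ∈ (⊤ : SimpleGraph (Fin n)).edgeSet) :
    ∃ f ∈ (⊤ : SimpleGraph (Fin n)).edgeSet, f ≠ e := by
  induction e with
  | _ a b =>
    rw [SimpleGraph.mem_edgeSet, top_adj] at he
    have hz : ∃ z : Fin n, z ≠ a ∧ z ≠ b := by
      by_contra h
      push_neg at h
      have hsub : (Finset.univ : Finset (Fin n)) ⊆ {a, b} := by
        intro z _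
        rcases Classical.em (z = a) with h1 | h1
        · simp [h1]
        · simp [h z h1]
      have hcard := Finset.card_le_card hsub
      simp only [Finset.card_univ, Fintype.card_fin] at hcard
      have h2 : ({a, b} : Finset (Fin n)).card ≤ 2 :=
        (Finset.card_insert_le _ _).trans (by simp)
      omega
    obtain ⟨z, hza, hzb⟩ := hz
    refine ⟨s(a, z), ?_, ?_⟩
    · rw [SimpleGraph.mem_edgeSet, top_adj]; exact fun h => hza h.symm
    · rw [Ne, Sym2.congr_right]; exact hzb

/-- Main counting lemma, indexed form. -/
lemma key_aux {n k : ℕ} (hn : 3 ≤ n)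
    (Q : Fin k → (Σ u : Fin n, Σ v : Fin n, (⊤ : SimpleGraph (Fin n)).Walk u v))
    (hpath : ∀ i, (Q i).2.2.IsPath)
    (hsep : ∀ e ∈ (⊤ : SimpleGraph (Fin n)).edgeSet,
      ∀ f ∈ (⊤ : SimpleGraph (Fin n)).edgeSet, e ≠ f →
      ∃ i, e ∈ (Q i).2.2.edges ∧ f ∉ (Q i).2.2.edges) : n ≤ k := by
  classical
  -- every edge is in some path
  have hone : ∀ e ∈ (⊤ : SimpleGraph (Fin n)).edgeFinset, 1 ≤ cnt Q e := by
    intro e he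
    rw [SimpleGraph.mem_edgeFinset] at he
    obtain ⟨f, hf, hfe⟩ := exists_other_edge hn he
    obtain ⟨i, hep, _⟩ := hsep e he f hf (Ne.symm hfe)
    exact Finset.card_pos.mpr ⟨i, Finset.mem_filter.mpr ⟨Finset.mem_univ _, hep⟩⟩
  -- every edge of a path with at least two edges is in at least two paths
  have htwo : ∀ i : Fin k, 2 ≤ (Q i).2.2.edges.length →
      ∀ e ∈ (Q i).2.2.edges, 2 ≤ cnt Q e := by
    intro i hlen e he
    have hnodup : (Q i).2.2.edges.Nodup := (hpath i).isTrail.edges_nodup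
    have hcard : (Q i).2.2.edges.toFinset.card = (Q i).2.2.edges.length := by
      rw [List.card_toFinset, hnodup.dedup]
    have h1lt : 1 < (Q i).2.2.edges.toFinset.card := by omega
    obtain ⟨f, hfmem, hfe⟩ := Finset.exists_mem_ne h1lt e
    rw [List.mem_toFinset] at hfmem
    have heE : e ∈ (⊤ : SimpleGraph (Fin n)).edgeSet := (Q i).2.2.edges_subset_edgeSet he
    have hfE : f ∈ (⊤ : SimpleGraph (Fin n)).edgeSet := (Q i).2.2.edges_subset_edgeSet hfmem
    obtain ⟨j, hej, hfj⟩ := hsep e heE f hfE (Ne.symm hfe)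
    have hij : j ≠ i := fun h => hfj (h ▸ hfmem)
    exact Finset.one_lt_card.mpr ⟨j, Finset.mem_filter.mpr ⟨Finset.mem_univ _, hej⟩,
      i, Finset.mem_filter.mpr ⟨Finset.mem_univ _, he⟩, hij⟩
  -- double counting
  have hswap : (((⊤ : SimpleGraph (Fin n)).edgeFinset.card : ℚ)) =
      ∑ i : Fin k, ∑ e ∈ (⊤ : SimpleGraph (Fin n)).edgeFinset,
        (if e ∈ (Q i).2.2.edges then (1 : ℚ) / cnt Q e else 0) := by
    rw [Finset.sum_comm]
    rw [Finset.card_eq_sum_ones, Nat.cast_sum]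
    refine Finset.sum_congr rfl fun e he => ?_
    have h1 := hone e he
    have hcne : ((cnt Q e : ℚ)) ≠ 0 := by positivity
    rw [← Finset.sum_filter, Finset.sum_const]
    show ((1 : ℕ) : ℚ) = cnt Q e • ((1:ℚ) / cnt Q e)
    rw [nsmul_eq_mul]
    field_simp
    norm_num
  -- per-path bound
  have hbound : ∀ i : Fin k,
      ∑ e ∈ (⊤ : SimpleGraph (Fin n)).edgeFinset,
        (if e ∈ (Q i).2.2.edges then (1 : ℚ) / cnt Q e else 0) ≤ ((n : ℚ) - 1) / 2 := by
    intro i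
    rw [← Finset.sum_filter]
    have hsub : (⊤ : SimpleGraph (Fin n)).edgeFinset.filter (fun e => e ∈ (Q i).2.2.edges)
        ⊆ (Q i).2.2.edges.toFinset := by
      intro e hes
      rw [List.mem_toFinset]
      exact (Finset.mem_filter.mp hes).2
    have hscard : ((⊤ : SimpleGraph (Fin n)).edgeFinset.filter
        (fun e => e ∈ (Q i).2.2.edges)).card ≤ (Q i).2.2.edges.length :=
      (Finset.card_le_card hsub).trans (List.toFinset_card_le _)
    rcases le_or_gt (Q i).2.2.edges.length 1 with hlen | hlen
    · -- short path: at most one edge, each term ≤ 1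
      have hterm : ∀ e ∈ (⊤ : SimpleGraph (Fin n)).edgeFinset.filter
          (fun e => e ∈ (Q i).2.2.edges), (1 : ℚ) / cnt Q e ≤ 1 := by
        intro e hes
        have h1 := hone e (Finset.mem_filter.mp hes).1
        have h1' : (1 : ℚ) ≤ cnt Q e := by exact_mod_cast h1
        rw [div_le_one (by linarith)]
        linarith
      calc ∑ e ∈ (⊤ : SimpleGraph (Fin n)).edgeFinset.filter
              (fun e => e ∈ (Q i).2.2.edges), (1 : ℚ) / cnt Q e
          ≤ ∑ _e ∈ (⊤ : SimpleGraph (Fin n)).edgeFinset.filter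
              (fun e => e ∈ (Q i).2.2.edges), (1 : ℚ) := Finset.sum_le_sum hterm
        _ = ((⊤ : SimpleGraph (Fin n)).edgeFinset.filter
              (fun e => e ∈ (Q i).2.2.edges)).card := by
            rw [Finset.sum_const, nsmul_eq_mul, mul_one]
        _ ≤ 1 := by exact_mod_cast hscard.trans hlen
        _ ≤ ((n : ℚ) - 1) / 2 := by
            rw [le_div_iff₀ (by norm_num : (0:ℚ) < 2)]
            have h3 : (3 : ℚ) ≤ n := by exact_mod_cast hn
            linarith
    · -- long path: each term ≤ 1/2, at most n - 1 edges
      have hterm : ∀ e ∈ (⊤ : SimpleGraph (Fin n)).edgeFinset.filter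
          (fun e => e ∈ (Q i).2.2.edges), (1 : ℚ) / cnt Q e ≤ 1 / 2 := by
        intro e hes
        have h2 := htwo i hlen e (Finset.mem_filter.mp hes).2
        have h2' : (2 : ℚ) ≤ cnt Q e := by exact_mod_cast h2
        rw [div_le_div_iff₀ (by linarith) (by norm_num)]
        linarith
      have hlen2 : (Q i).2.2.edges.length ≤ n - 1 := by
        have hl := (hpath i).length_lt
        rw [Fintype.card_fin] at hl
        rw [SimpleGraph.Walk.length_edges]
        omega
      have hcard2 : (((⊤ : SimpleGraph (Fin n)).edgeFinset.filter
          (fun e => e ∈ (Q i).2.2.edges)).card : ℚ) ≤ (n : ℚ) - 1 := by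
        have h1 : ((⊤ : SimpleGraph (Fin n)).edgeFinset.filter
            (fun e => e ∈ (Q i).2.2.edges)).card ≤ n - 1 := hscard.trans hlen2
        have h3 : 1 ≤ n := by omega
        have h2 : (((⊤ : SimpleGraph (Fin n)).edgeFinset.filter
            (fun e => e ∈ (Q i).2.2.edges)).card : ℚ) ≤ ((n - 1 : ℕ) : ℚ) := by
          exact_mod_cast h1
        calc (((⊤ : SimpleGraph (Fin n)).edgeFinset.filter
            (fun e => e ∈ (Q i).2.2.edges)).card : ℚ) ≤ ((n - 1 : ℕ) : ℚ) := h2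
          _ = (n : ℚ) - 1 := by push_cast [h3]; ring
      calc ∑ e ∈ (⊤ : SimpleGraph (Fin n)).edgeFinset.filter
              (fun e => e ∈ (Q i).2.2.edges), (1 : ℚ) / cnt Q e
          ≤ ∑ _e ∈ (⊤ : SimpleGraph (Fin n)).edgeFinset.filter
              (fun e => e ∈ (Q i).2.2.edges), (1 : ℚ) / 2 := Finset.sum_le_sum hterm
        _ = ((⊤ : SimpleGraph (Fin n)).edgeFinset.filter
              (fun e => e ∈ (Q i).2.2.edges)).card * (1 / 2) := by
            rw [Finset.sum_const, nsmul_eq_mul]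
        _ ≤ ((n : ℚ) - 1) * (1 / 2) := by nlinarith [hcard2]
        _ = ((n : ℚ) - 1) / 2 := by ring
  -- total bound
  have htotal : (((⊤ : SimpleGraph (Fin n)).edgeFinset.card : ℚ)) ≤
      (k : ℚ) * (((n : ℚ) - 1) / 2) := by
    rw [hswap]
    calc ∑ i : Fin k, ∑ e ∈ (⊤ : SimpleGraph (Fin n)).edgeFinset,
            (if e ∈ (Q i).2.2.edges then (1 : ℚ) / cnt Q e else 0)
        ≤ ∑ _i : Fin k, ((n : ℚ) - 1) / 2 := Finset.sum_le_sum fun i _ => hbound i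
      _ = (k : ℚ) * (((n : ℚ) - 1) / 2) := by
          rw [Finset.sum_const, nsmul_eq_mul, Finset.card_univ, Fintype.card_fin]
  -- the number of edges of K_n
  have hE : 2 * (⊤ : SimpleGraph (Fin n)).edgeFinset.card = n * (n - 1) := by
    rw [SimpleGraph.card_edgeFinset_top_eq_card_choose_two, Fintype.card_fin,
      Nat.choose_two_right]
    refine Nat.mul_div_cancel' ?_
    obtain ⟨m, rfl⟩ : ∃ m, n = m + 1 := ⟨n - 1, by omega⟩
    simpa [mul_comm] using (Nat.even_mul_succ_self m).two_dvd
  -- conclude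
  have hEq : (n : ℚ) * ((n : ℚ) - 1) ≤ (k : ℚ) * ((n : ℚ) - 1) := by
    have h3 : 1 ≤ n := by omega
    have h1 : (n : ℚ) * ((n : ℚ) - 1) = 2 * (((⊤ : SimpleGraph (Fin n)).edgeFinset.card : ℚ)) := by
      have := congrArg (fun m : ℕ => (m : ℚ)) hE
      push_cast [h3] at this
      linarith [this]
    rw [h1]
    linarith [htotal]
  have hn1 : (0 : ℚ) < (n : ℚ) - 1 := by
    have h3 : (3 : ℚ) ≤ n := by exact_mod_cast hn
    linarith
  have hf : (n : ℚ) ≤ k := le_of_mul_le_mul_right hEq hn1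
  exact_mod_cast hf

/-- Main counting lemma: every strong-separating path system of `K_n`, `n ≥ 3`,
has at least `n` members. -/
lemma key_lower {n : ℕ} (hn : 3 ≤ n)
    (P : List (Σ u : Fin n, Σ v : Fin n, (⊤ : SimpleGraph (Fin n)).Walk u v))
    (hP : IsStrongSeparatingSystem (⊤ : SimpleGraph (Fin n)) P) : n ≤ P.length := by
  refine key_aux hn (fun i => P.get i) ?_ ?_
  · exact fun i => hP.1 (P.get i) (List.mem_iff_get.mpr ⟨i, rfl⟩)
  · intro e he f hf hef
    obtain ⟨p, hpP, hep, hfp⟩ := hP.2 e he f hf hef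
    obtain ⟨j, hj⟩ := List.mem_iff_get.mp hpP
    exact ⟨j, show e ∈ (P.get j).2.2.edges by rw [hj]; exact hep,
      show f ∉ (P.get j).2.2.edges by rw [hj]; exact hfp⟩

/-- The system of all single-edge paths of `K_n`. -/
def singletonSystem (n : ℕ) : List (Σ u : Fin n, Σ v : Fin n, (⊤ : SimpleGraph (Fin n)).Walk u v) :=
  ((List.finRange n).product (List.finRange n)).filterMap
    (fun uv => if h : (⊤ : SimpleGraph (Fin n)).Adj uv.1 uv.2 then
        some ⟨uv.1, uv.2, SimpleGraph.Walk.cons h SimpleGraph.Walk.nil⟩ else none)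

lemma singletonSystem_isSSS (n : ℕ) :
    IsStrongSeparatingSystem (⊤ : SimpleGraph (Fin n)) (singletonSystem n) := by
  constructor
  · intro p hp
    obtain ⟨⟨u, v⟩, _, hpv⟩ := List.mem_filterMap.mp hp
    by_cases h : (⊤ : SimpleGraph (Fin n)).Adj u v
    · rw [dif_pos h, Option.some_inj] at hpv
      subst hpv
      simp [SimpleGraph.Walk.isPath_def, h.ne]
    · rw [dif_neg h] at hpv; exact absurd hpv (by simp)
  · intro e he f _ hef
    induction e with
    | _ a b =>
      rw [SimpleGraph.mem_edgeSet] at he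
      refine ⟨⟨a, b, SimpleGraph.Walk.cons he SimpleGraph.Walk.nil⟩, ?_, ?_, ?_⟩
      · refine List.mem_filterMap.mpr ⟨(a, b), ?_, ?_⟩
        · exact List.mem_product.mpr ⟨List.mem_finRange a, List.mem_finRange b⟩
        · rw [dif_pos he]
      · simp
      · simp only [SimpleGraph.Walk.edges_cons, SimpleGraph.Walk.edges_nil,
          List.mem_singleton]
        exact fun h => hef (h ▸ rfl)

/-- For `n ≥ 3`, every strong-separating path system in `K_n` has at least `n` paths;
in particular `ssp (K_n) ≥ n`. -/
theorem ssp_completeGraph_lower (n : ℕ) (hn : 3 ≤ n) :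
    (∀ P : List (Σ u : Fin n, Σ v : Fin n, (⊤ : SimpleGraph (Fin n)).Walk u v),
      IsStrongSeparatingSystem (⊤ : SimpleGraph (Fin n)) P → n ≤ P.length) ∧
    n ≤ ssp (⊤ : SimpleGraph (Fin n)) := by
  constructor
  · exact fun P hP => key_lower hn P hP
  · refine le_csInf ⟨(singletonSystem n).length, singletonSystem n,
      singletonSystem_isSSS n, rfl⟩ ?_
    rintro k ⟨P, hP, rfl⟩
    exact key_lower hn P hP
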